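/- Let a, c, K_W be real numbers with c ≠ a, K_W > 0 and |a| < 1, and let (Σ_t)_{t≥1} satisfy the ARMA(a,c) difference Riccati recursion with an arbitrary initial condition Σ_1 ≥ 0. Then Σ_n converges to 0 as n → ∞, where 0 is the unique nonnegative stabilizing solution of the corresponding algebraic Riccati equation. -/

import Mathlib

/-- for `|a| < 1`, the ARMA(a,c) difference Riccati recursion with arbitrary
nonnegative initial condition converges to `0`, where `0` is the unique nonnegative
stabilizing solution of the corresponding algebraic Riccati equation
(the gain is `M(Σ) = (cΣ(c-a)+K_W)/(K_W+(c-a)²Σ)` and the closed-loop coefficient is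
`M^{CL}(Σ) = c - M(Σ)(c-a)`; stabilizing means `|M^{CL}(Σ)| < 1`). -/
theorem stmt_3 (a c KW : ℝ) (hca : c ≠ a) (hKW : 0 < KW) (ha : |a| < 1)
    (Sig : ℕ → ℝ) (h0 : 0 ≤ Sig 0)
    (hrec : ∀ t, Sig (t + 1) =
      c ^ 2 * Sig t + KW - (c * Sig t * (c - a) + KW) ^ 2 / (KW + (c - a) ^ 2 * Sig t)) :
    Filter.Tendsto Sig Filter.atTop (nhds 0) ∧
    ((0 : ℝ) = c ^ 2 * 0 + KW - (c * 0 * (c - a) + KW) ^ 2 / (KW + (c - a) ^ 2 * 0) ∧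
      |c - (c * 0 * (c - a) + KW) / (KW + (c - a) ^ 2 * 0) * (c - a)| < 1) ∧
    (∀ S : ℝ, 0 ≤ S →
      S = c ^ 2 * S + KW - (c * S * (c - a) + KW) ^ 2 / (KW + (c - a) ^ 2 * S) →
      |c - (c * S * (c - a) + KW) / (KW + (c - a) ^ 2 * S) * (c - a)| < 1 →
      S = 0) := by
  have ha2 : a ^ 2 < 1 := by nlinarith [sq_abs a, abs_nonneg a]
  have hpos : ∀ x : ℝ, 0 ≤ x → 0 < KW + (c - a) ^ 2 * x := fun x hx => by positivity
  have hid : ∀ x : ℝ, 0 ≤ x →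
      c ^ 2 * x + KW - (c * x * (c - a) + KW) ^ 2 / (KW + (c - a) ^ 2 * x) =
      a ^ 2 * KW * x / (KW + (c - a) ^ 2 * x) := by
    intro x hx
    have h := (hpos x hx).ne'
    field_simp
    ring
  have hnn : ∀ t, 0 ≤ Sig t := by
    intro t
    induction t with
    | zero => exact h0
    | succ n ih =>
      rw [hrec n, hid _ ih]
      positivity
  have hstep : ∀ t, Sig (t + 1) ≤ a ^ 2 * Sig t := by
    intro t
    rw [hrec t, hid _ (hnn t)]
    rw [div_le_iff₀ (hpos _ (hnn t))]
    nlinarith [hnn t, sq_nonneg (c - a), sq_nonneg a, mul_nonneg (mul_nonneg (sq_nonneg a) (hnn t)) (mul_nonneg (sq_nonneg (c - a)) (hnn t))]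
  have hbound : ∀ n, Sig n ≤ (a ^ 2) ^ n * Sig 0 := by
    intro n
    induction n with
    | zero => simp
    | succ m ih =>
      calc Sig (m + 1) ≤ a ^ 2 * Sig m := hstep m
        _ ≤ a ^ 2 * ((a ^ 2) ^ m * Sig 0) := by
            exact mul_le_mul_of_nonneg_left ih (sq_nonneg a)
        _ = (a ^ 2) ^ (m + 1) * Sig 0 := by ring
  refine ⟨?_, ⟨?_, ?_⟩, ?_⟩
  · have hlim : Filter.Tendsto (fun n => (a ^ 2) ^ n * Sig 0) Filter.atTop (nhds 0) := by
      have := tendsto_pow_atTop_nhds_zero_of_lt_one (sq_nonneg a) ha2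
      simpa using this.mul_const (Sig 0)
    exact tendsto_of_tendsto_of_tendsto_of_le_of_le tendsto_const_nhds hlim hnn hbound
  · have h := hid 0 le_rfl
    simp only [mul_zero, zero_mul] at h ⊢
    rw [h]; simp
  · simp only [mul_zero, zero_mul, zero_add, add_zero, div_self hKW.ne', one_mul]
    simpa using ha
  · intro S hS heq _
    rw [hid S hS] at heq
    have h := (hpos S hS).ne'
    field_simp at heq
    rcases (eq_or_lt_of_le hS).imp_left Eq.symm with h0' | h0'
    · exact h0'
    · exfalso
      nlinarith [mul_pos hKW h0', mul_nonneg (mul_nonneg (sq_nonneg (c - a)) hS) hS]
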